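/- Expected value of the worst-case ADMC size estimator: let n, p be natural numbers with n ≥ 1 and p ≥ 2, let ε > 0 be real, and set β = n·p. Then the expectation of 1/(X + ε) for X a Gamma random variable with shape p and rate β equals ε^{p−1}·e^{εβ}·β^p·Γ(1−p, εβ), expressed as the integral identity ∫₀^∞ (β^p / (p−1)!) · x^{p−1} · e^{−βx} / (x + ε) dx = ε^{p−1} · e^{εβ} · β^p · ∫_{εβ}^∞ t^{−p} · e^{−t} dt. -/

import Mathlib

open MeasureTheory Set Filter Topology

/-- Shift of an integral over `Ioi`. -/
lemma my_shift_Ioi (f : ℝ → ℝ) (a d : ℝ) :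
    ∫ x in Set.Ioi a, f (x + d) = ∫ x in Set.Ioi (a + d), f x := by
  have h := (measurePreserving_add_right (volume : Measure ℝ) d).setIntegral_preimage_emb
    (measurableEmbedding_addRight d) f (Set.Ioi (a + d))
  simpa using h

lemma my_intOn_pow_exp {β : ℝ} (hβ : 0 < β) (k : ℕ) :
    IntegrableOn (fun x : ℝ => x ^ k * Real.exp (-β * x)) (Set.Ioi 0) := by
  have h := integrableOn_rpow_mul_exp_neg_mul_rpow (s := (k : ℝ)) (p := 1) (b := β)
    (neg_one_lt_zero.trans_le (Nat.cast_nonneg k)) one_pos hβ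
  refine h.congr_fun (fun x hx => ?_) measurableSet_Ioi
  simp [Real.rpow_natCast, Real.rpow_one]

lemma my_val_pow_exp {β : ℝ} (hβ : 0 < β) (k : ℕ) :
    ∫ x in Set.Ioi (0:ℝ), x ^ k * Real.exp (-β * x)
      = (Nat.factorial k : ℝ) / β ^ (k + 1) := by
  have h := Real.integral_rpow_mul_exp_neg_mul_Ioi (a := (k : ℝ) + 1) (r := β)
    (by positivity) hβ
  have h2 : ∫ x in Set.Ioi (0:ℝ), x ^ k * Real.exp (-β * x)
      = ∫ t : ℝ in Set.Ioi 0, t ^ ((k : ℝ) + 1 - 1) * Real.exp (-(β * t)) := by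
    refine setIntegral_congr_fun measurableSet_Ioi (fun x hx => ?_)
    rw [add_sub_cancel_right, Real.rpow_natCast, neg_mul]
  rw [h2, h]
  have h3 : ((k : ℝ) + 1) = ((k + 1 : ℕ) : ℝ) := by push_cast; ring
  rw [h3, Real.rpow_natCast, ← h3, Real.Gamma_nat_eq_factorial]
  rw [one_div, inv_pow]
  field_simp

lemma my_intOn_lhs {β ε : ℝ} (hβ : 0 < β) (hε : 0 < ε) (k : ℕ) :
    IntegrableOn (fun x : ℝ => x ^ k * Real.exp (-β * x) / (x + ε)) (Set.Ioi 0) := by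
  apply Integrable.mono' ((my_intOn_pow_exp hβ k).const_mul ε⁻¹)
  · exact (((measurable_id.pow_const k).mul
      ((Real.measurable_exp).comp (measurable_const.mul measurable_id))).div
      (measurable_id.add_const ε)).aestronglyMeasurable
  · filter_upwards [ae_restrict_mem measurableSet_Ioi] with x hx
    have hx0 : (0:ℝ) < x := hx
    have h1 : (0:ℝ) < x + ε := by positivity
    have h2 : (0:ℝ) ≤ x ^ k * Real.exp (-β * x) := by positivity
    rw [Real.norm_eq_abs, abs_of_nonneg (by positivity), inv_mul_eq_div]
    apply div_le_div_of_nonneg_left h2 hε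
    linarith

lemma my_intOn_zpow_exp {c : ℝ} (hc : 0 < c) (p : ℕ) :
    IntegrableOn (fun t : ℝ => t ^ (-(p:ℤ)) * Real.exp (-t)) (Set.Ioi c) := by
  have heq : (fun t : ℝ => t ^ (-(p:ℤ)) * Real.exp (-t))
      = fun t : ℝ => (t ^ p)⁻¹ * Real.exp (-t) := by
    funext t; rw [zpow_neg, zpow_natCast]
  rw [heq]
  apply Integrable.mono' ((exp_neg_integrableOn_Ioi c one_pos).const_mul ((c ^ p)⁻¹))
  · exact ((measurable_id.pow_const p).inv.mul
      ((Real.measurable_exp).comp measurable_neg)).aestronglyMeasurable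
  · filter_upwards [ae_restrict_mem measurableSet_Ioi] with t ht
    have htc : c < t := ht
    have ht0 : (0:ℝ) < t := hc.trans htc
    rw [Real.norm_eq_abs, abs_of_nonneg (by positivity), neg_one_mul]
    gcongr

lemma my_base {β ε : ℝ} (hβ : 0 < β) (hε : 0 < ε) :
    ∫ x in Set.Ioi (0:ℝ), Real.exp (-β * x) / (x + ε)
      = Real.exp (ε * β) * ∫ t in Set.Ioi (ε * β), t ^ (-(1:ℤ)) * Real.exp (-t) := by
  set f : ℝ → ℝ := fun t => t ^ (-(1:ℤ)) * Real.exp (-t) with hf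
  have h3 : ∀ x ∈ Set.Ioi (0:ℝ),
      f (β * x + ε * β) = β⁻¹ * Real.exp (-(ε * β)) * (Real.exp (-β * x) / (x + ε)) := by
    intro x hx
    have hx0 : (0:ℝ) < x := hx
    have h : β * x + ε * β = β * (x + ε) := by ring
    rw [hf]
    simp only
    rw [h, zpow_neg_one, mul_inv,
      show -(β * (x + ε)) = -β * x + -(ε * β) by ring, Real.exp_add]
    field_simp
  have key : ∫ t in Set.Ioi (ε * β), f t
      = Real.exp (-(ε * β)) * ∫ x in Set.Ioi (0:ℝ), Real.exp (-β * x) / (x + ε) := by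
    calc ∫ t in Set.Ioi (ε * β), f t = ∫ u in Set.Ioi (0:ℝ), f (u + ε * β) := by
          rw [my_shift_Ioi f 0 (ε * β), zero_add]
      _ = β * ∫ x in Set.Ioi (0:ℝ), f (β * x + ε * β) := by
          rw [integral_comp_mul_left_Ioi (fun u => f (u + ε * β)) 0 hβ, mul_zero,
            smul_eq_mul, ← mul_assoc, mul_inv_cancel₀ hβ.ne', one_mul]
      _ = β * ∫ x in Set.Ioi (0:ℝ),
            β⁻¹ * Real.exp (-(ε * β)) * (Real.exp (-β * x) / (x + ε)) := by
          rw [setIntegral_congr_fun measurableSet_Ioi h3]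
      _ = Real.exp (-(ε * β)) * ∫ x in Set.Ioi (0:ℝ), Real.exp (-β * x) / (x + ε) := by
          rw [integral_const_mul, ← mul_assoc, ← mul_assoc, mul_inv_cancel₀ hβ.ne', one_mul]
  rw [key, ← mul_assoc, ← Real.exp_add, add_neg_cancel, Real.exp_zero, one_mul]

lemma my_grec {c : ℝ} (hc : 0 < c) (p : ℕ) (hp : 1 ≤ p) :
    ∫ t in Set.Ioi c, t ^ (-((p+1:ℕ):ℤ)) * Real.exp (-t)
      = (1/(p:ℝ)) * (c ^ p)⁻¹ * Real.exp (-c)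
        - (1/(p:ℝ)) * ∫ t in Set.Ioi c, t ^ (-(p:ℤ)) * Real.exp (-t) := by
  have hp0 : (p:ℝ) ≠ 0 := by positivity
  set F : ℝ → ℝ := fun t => -(1/(p:ℝ)) * (t ^ (-(p:ℤ)) * Real.exp (-t)) with hF
  have hderiv : ∀ t ∈ Set.Ici c, HasDerivAt F
      (t ^ (-((p+1:ℕ):ℤ)) * Real.exp (-t)
        + (1/(p:ℝ)) * (t ^ (-(p:ℤ)) * Real.exp (-t))) t := by
    intro t ht
    have ht0 : t ≠ 0 := (hc.trans_le ht).ne'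
    have h1 := hasDerivAt_zpow (-(p:ℤ)) t (Or.inl ht0)
    have h2 : HasDerivAt (fun t : ℝ => Real.exp (-t)) (-Real.exp (-t)) t := by
      simpa using (hasDerivAt_neg t).exp
    have h3 := (h1.mul h2).const_mul (-(1/(p:ℝ)))
    convert h3 using 1
    · rfl
    · rfl
    · rfl
    have hz : t ^ (-(p:ℤ) - 1) = t ^ (-((p+1:ℕ):ℤ)) := by
      congr 1; push_cast; ring
    rw [hz]
    push_cast
    field_simp
    ring
  have f'int : IntegrableOn (fun t : ℝ =>
      t ^ (-((p+1:ℕ):ℤ)) * Real.exp (-t)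
        + (1/(p:ℝ)) * (t ^ (-(p:ℤ)) * Real.exp (-t))) (Set.Ioi c) :=
    (my_intOn_zpow_exp hc (p+1)).add ((my_intOn_zpow_exp hc p).const_mul _)
  have htend : Tendsto F atTop (𝓝 0) := by
    have h1 : Tendsto (fun t : ℝ => t ^ (-(p:ℤ)) * Real.exp (-t)) atTop (𝓝 (0 * 0)) :=
      (tendsto_zpow_atTop_zero (by simp; exact_mod_cast hp)).mul
        Real.tendsto_exp_neg_atTop_nhds_zero
    have h2 : Tendsto (fun t : ℝ => -(1/(p:ℝ)) * (t ^ (-(p:ℤ)) * Real.exp (-t)))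
        atTop (𝓝 (-(1/(p:ℝ)) * (0 * 0))) := h1.const_mul _
    rw [hF]
    simpa using h2
  have hmain := integral_Ioi_of_hasDerivAt_of_tendsto' hderiv f'int htend
  rw [integral_add (my_intOn_zpow_exp hc (p+1)) ((my_intOn_zpow_exp hc p).const_mul _),
    integral_const_mul] at hmain
  have hcz : c ^ (-(p:ℤ)) = (c ^ p)⁻¹ := by rw [zpow_neg, zpow_natCast]
  rw [hF] at hmain
  simp only [hcz] at hmain
  linarith

lemma my_aux {β ε : ℝ} (hβ : 0 < β) (hε : 0 < ε) :
    ∀ p : ℕ, 1 ≤ p →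
      ∫ x in Set.Ioi (0:ℝ), x ^ (p - 1) * Real.exp (-β * x) / (x + ε)
        = (Nat.factorial (p - 1) : ℝ) * ε ^ (p - 1) * Real.exp (ε * β) *
            ∫ t in Set.Ioi (ε * β), t ^ (-(p:ℤ)) * Real.exp (-t) := by
  refine Nat.le_induction ?_ ?_
  · simpa using my_base hβ hε
  · intro p hp IH
    obtain ⟨k, rfl⟩ : ∃ k, p = k + 1 := ⟨p - 1, (Nat.succ_pred_eq_of_pos hp).symm⟩
    have hεβ : 0 < ε * β := mul_pos hε hβ
    have hp0 : ((k:ℝ) + 1) ≠ 0 := by positivity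
    simp only [Nat.add_sub_cancel] at IH ⊢
    have hsplit : ∀ x ∈ Set.Ioi (0:ℝ),
        x ^ (k+1) * Real.exp (-β * x) / (x + ε)
          = x ^ k * Real.exp (-β * x)
            - ε * (x ^ k * Real.exp (-β * x) / (x + ε)) := by
      intro x hx
      have hx0 : (0:ℝ) < x := hx
      have hxε : x + ε ≠ 0 := by positivity
      rw [pow_succ]
      field_simp
      ring
    rw [setIntegral_congr_fun measurableSet_Ioi hsplit,
      integral_sub (my_intOn_pow_exp hβ k) ((my_intOn_lhs hβ hε k).const_mul ε),
      integral_const_mul, my_val_pow_exp hβ k, IH, my_grec hεβ (k+1) hp]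
    have hfac : (Nat.factorial (k+1) : ℝ) = ((k:ℝ)+1) * (Nat.factorial k : ℝ) := by
      rw [Nat.factorial_succ]; push_cast; ring
    rw [hfac, mul_pow, Real.exp_neg]
    have hE : Real.exp (ε * β) ≠ 0 := Real.exp_ne_zero _
    field_simp
    push_cast
    ring

/-- Expected value of 1/(X+ε) for X ~ Gamma(p, β) with β = n·p, expressed via the
upper incomplete gamma function: ∫₀^∞ βᵖ x^{p−1} e^{−βx}/((p−1)!·(x+ε)) dx
= ε^{p−1} e^{εβ} βᵖ ∫_{εβ}^∞ t^{−p} e^{−t} dt. -/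
theorem gamma_shifted_reciprocal_expectation
    (n p : ℕ) (hn : 1 ≤ n) (hp : 2 ≤ p)
    (ε : ℝ) (hε : 0 < ε)
    (β : ℝ) (hβ : β = (n : ℝ) * p) :
    ∫ x in Set.Ioi (0 : ℝ),
        (β ^ p / (Nat.factorial (p - 1) : ℝ)) * x ^ (p - 1) * Real.exp (-β * x) / (x + ε)
      = ε ^ (p - 1) * Real.exp (ε * β) * β ^ p *
        ∫ t in Set.Ioi (ε * β), t ^ (-(p : ℤ)) * Real.exp (-t) := by
  have hn0 : (0:ℝ) < n := by exact_mod_cast hn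
  have hp0 : (0:ℝ) < p := by exact_mod_cast (by omega : 0 < p)
  have hβ0 : 0 < β := by rw [hβ]; exact mul_pos hn0 hp0
  have hF : (Nat.factorial (p-1) : ℝ) ≠ 0 := Nat.cast_ne_zero.mpr (Nat.factorial_ne_zero _)
  have heq : ∀ x : ℝ,
      (β ^ p / (Nat.factorial (p - 1) : ℝ)) * x ^ (p - 1) * Real.exp (-β * x) / (x + ε)
        = (β ^ p / (Nat.factorial (p - 1) : ℝ)) *
            (x ^ (p - 1) * Real.exp (-β * x) / (x + ε)) := fun x => by ring
  simp_rw [heq]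
  rw [integral_const_mul, my_aux hβ0 hε p (by omega)]
  field_simp
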